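/- (Covering perturbation bound for squared TD errors with optimal-Q targets). Let H ≥ 1 and ρ ≥ 0. Let r and r̂ be reward functions with values in [0,1] satisfying max_{h ∈ {1,…,H}} max_{(s,a)} |r_h(s,a) − r̂_h(s,a)| ≤ ρ, and let Q_h, Q̂_h : S × A → [0, H] satisfy max_{(s,a)} |Q_h(s,a) − Q̂_h(s,a)| ≤ ρ for a fixed h ∈ {1,…,H}. For a function G : S×A → ℝ with values in [0,H] and reward component g_h, define Z(G, g)(s,a,s') := ( G(s,a) − g_h(s,a) − max_{a' ∈ A} Q^{*,g}_{h+1}(s',a') )² − ( Q^{*,g}_h(s,a) − g_h(s,a) − max_{a' ∈ A} Q^{*,g}_{h+1}(s',a') )². Then for all s, a, s': | Z(Q_h, r)(s,a,s') − Z(Q̂_h, r̂)(s,a,s') | ≤ 30 H² ρ. -/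
import Mathlib


open scoped BigOperators

/-- Expectation of a real-valued function under a probability mass function
on a finite type. -/
noncomputable def pExp {α : Type*} [Fintype α] (p : PMF α) (f : α → ℝ) : ℝ :=
  ∑ x, (p x).toReal * f x

/-- Optimal Q-value function by backward recursion on the number of remaining
steps: `Qaux P r H t s a` is `Q^{*,r}_{H+1-t}(s,a)`, i.e. the optimal Q-value
with `t` steps remaining (so `Qaux P r H 0 = Q^{*,r}_{H+1} ≡ 0`). -/
noncomputable def Qaux {S A : Type*} [Fintype S] [Fintype A]
    (P : ℕ → S → A → PMF S) (r : ℕ → S → A → ℝ) (H : ℕ) : ℕ → S → A → ℝ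
  | 0, _, _ => 0
  | (t + 1), s, a =>
      r (H - t) s a + pExp (P (H - t) s a) (fun s' => ⨆ a', Qaux P r H t s' a')

open scoped BigOperators

lemma pExp_sum_one {α : Type*} [Fintype α] (p : PMF α) :
    ∑ x, (p x).toReal = 1 := by
  have h := p.tsum_coe
  rw [tsum_fintype] at h
  rw [← ENNReal.toReal_sum (fun a _ => (p.apply_ne_top a))]
  simp [h]

lemma pExp_le {α : Type*} [Fintype α] (p : PMF α) (f : α → ℝ) (c : ℝ)
    (hf : ∀ x, f x ≤ c) : pExp p f ≤ c := by
  calc pExp p f ≤ ∑ x, (p x).toReal * c :=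
        Finset.sum_le_sum fun x _ => mul_le_mul_of_nonneg_left (hf x) ENNReal.toReal_nonneg
    _ = c := by rw [← Finset.sum_mul, pExp_sum_one, one_mul]

lemma le_pExp {α : Type*} [Fintype α] (p : PMF α) (f : α → ℝ) (c : ℝ)
    (hf : ∀ x, c ≤ f x) : c ≤ pExp p f := by
  have := pExp_le p (fun x => -f x) (-c) (fun x => by simpa using hf x)
  simp only [pExp] at this ⊢
  simp only [mul_neg, Finset.sum_neg_distrib] at this
  linarith

lemma abs_pExp_sub_le {α : Type*} [Fintype α] (p : PMF α) (f g : α → ℝ) (c : ℝ)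
    (hc : ∀ x, |f x - g x| ≤ c) : |pExp p f - pExp p g| ≤ c := by
  have h1 : pExp p f - pExp p g = pExp p (fun x => f x - g x) := by
    simp [pExp, mul_sub, Finset.sum_sub_distrib]
  rw [h1, abs_le]
  constructor
  · exact le_pExp _ _ _ fun x => by have := (abs_le.mp (hc x)).1; linarith
  · exact pExp_le _ _ _ fun x => (abs_le.mp (hc x)).2

lemma my_ciSup_le {A : Type*} [Fintype A] [Nonempty A] (f : A → ℝ) (c : ℝ)
    (h : ∀ a, f a ≤ c) : (⨆ a, f a) ≤ c := ciSup_le h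

lemma my_le_ciSup {A : Type*} [Fintype A] [Nonempty A] (f : A → ℝ) (a : A) :
    f a ≤ ⨆ a', f a' := le_ciSup (Set.Finite.bddAbove (Set.finite_range f)) a

lemma abs_ciSup_sub_le {A : Type*} [Fintype A] [Nonempty A] (f g : A → ℝ) (c : ℝ)
    (hc : ∀ a, |f a - g a| ≤ c) : |(⨆ a, f a) - ⨆ a, g a| ≤ c := by
  rw [abs_sub_le_iff]
  constructor
  · have : (⨆ a, f a) ≤ (⨆ a, g a) + c :=
      my_ciSup_le _ _ fun a => by
        have := (abs_le.mp (hc a)).2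
        have := my_le_ciSup g a
        linarith
    linarith
  · have : (⨆ a, g a) ≤ (⨆ a, f a) + c :=
      my_ciSup_le _ _ fun a => by
        have := (abs_le.mp (hc a)).1
        have := my_le_ciSup f a
        linarith
    linarith

lemma final_arith (x c : ℝ) (hx : 1 ≤ x) (hc : 0 ≤ c) :
    2*(x+1)*((x+2)*c) + 2*(x+1)*((2*x+1)*c) ≤ 30*x^2*c := by
  nlinarith [mul_nonneg hc (sq_nonneg (x-1)), mul_nonneg (by linarith : (0:ℝ) ≤ 36*x-30) hc]

lemma Qaux_bounds {S A : Type*} [Fintype S] [Fintype A] [Nonempty A]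
    (P : ℕ → S → A → PMF S) (r : ℕ → S → A → ℝ) (H : ℕ)
    (hr : ∀ h', 1 ≤ h' → h' ≤ H → ∀ s a, 0 ≤ r h' s a ∧ r h' s a ≤ 1) :
    ∀ t, t ≤ H → ∀ s a, 0 ≤ Qaux P r H t s a ∧ Qaux P r H t s a ≤ (t : ℝ) := by
  intro t
  induction t with
  | zero => intro _ s a; simp [Qaux]
  | succ t ih =>
    intro ht s a
    have ht' : t ≤ H := Nat.le_of_succ_le ht
    have h1 : 1 ≤ H - t := by omega
    have h2 : H - t ≤ H := Nat.sub_le _ _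
    obtain ⟨hr0, hr1⟩ := hr (H - t) h1 h2 s a
    have hVb : ∀ s', 0 ≤ (⨆ a', Qaux P r H t s' a') ∧
        (⨆ a', Qaux P r H t s' a') ≤ (t : ℝ) := by
      intro s'
      constructor
      · exact le_trans (ih ht' s' (Classical.arbitrary A)).1
          (my_le_ciSup _ (Classical.arbitrary A))
      · exact my_ciSup_le _ _ fun a' => (ih ht' s' a').2
    constructor
    · have := le_pExp (P (H - t) s a) (fun s' => ⨆ a', Qaux P r H t s' a') 0
        (fun s' => (hVb s').1)
      simp only [Qaux]
      linarith
    · have := pExp_le (P (H - t) s a) (fun s' => ⨆ a', Qaux P r H t s' a') (t : ℝ)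
        (fun s' => (hVb s').2)
      simp only [Qaux]
      push_cast
      linarith

lemma Qaux_close {S A : Type*} [Fintype S] [Fintype A] [Nonempty A]
    (P : ℕ → S → A → PMF S) (r rhat : ℕ → S → A → ℝ) (H : ℕ) (ρ : ℝ)
    (hrclose : ∀ h', 1 ≤ h' → h' ≤ H → ∀ s a, |r h' s a - rhat h' s a| ≤ ρ) :
    ∀ t, t ≤ H → ∀ s a,
      |Qaux P r H t s a - Qaux P rhat H t s a| ≤ (t : ℝ) * ρ := by
  intro t
  induction t with
  | zero => intro _ s a; simp [Qaux]
  | succ t ih =>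
    intro ht s a
    have ht' : t ≤ H := Nat.le_of_succ_le ht
    have h1 : 1 ≤ H - t := by omega
    have h2 : H - t ≤ H := Nat.sub_le _ _
    have hrc := hrclose (H - t) h1 h2 s a
    have hV : ∀ s', |(⨆ a', Qaux P r H t s' a') - ⨆ a', Qaux P rhat H t s' a'|
        ≤ (t : ℝ) * ρ :=
      fun s' => abs_ciSup_sub_le _ _ _ fun a' => ih ht' s' a'
    have hE := abs_pExp_sub_le (P (H - t) s a)
      (fun s' => ⨆ a', Qaux P r H t s' a')
      (fun s' => ⨆ a', Qaux P rhat H t s' a') ((t : ℝ) * ρ) hV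
    simp only [Qaux]
    have habs : ∀ x y u v : ℝ, |x - y| ≤ ρ → |u - v| ≤ (t:ℝ)*ρ →
        |x + u - (y + v)| ≤ (↑(t+1) : ℝ) * ρ := by
      intro x y u v hxy huv
      have : x + u - (y + v) = (x - y) + (u - v) := by ring
      rw [this]
      calc |(x - y) + (u - v)| ≤ |x - y| + |u - v| := abs_add_le _ _
        _ ≤ ρ + (t:ℝ)*ρ := add_le_add hxy huv
        _ = (↑(t+1) : ℝ) * ρ := by push_cast; ring
    exact habs _ _ _ _ hrc hE
/-- Covering perturbation bound for squared TD errors with optimal-Q targets.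
Here `Z G g s a s'` is
`(G(s,a) − g_h(s,a) − max_{a'} Q^{*,g}_{h+1}(s',a'))²
 − (Q^{*,g}_h(s,a) − g_h(s,a) − max_{a'} Q^{*,g}_{h+1}(s',a'))²`,
with `Q^{*,g}_{h'} = Qaux P g H (H + 1 − h')`. -/
theorem covering_perturbation_bound {S A : Type*} [Fintype S] [Fintype A]
    [Nonempty S] [Nonempty A]
    (H : ℕ) (hH : 1 ≤ H) (P : ℕ → S → A → PMF S)
    (h : ℕ) (hh1 : 1 ≤ h) (hh2 : h ≤ H)
    (ρ : ℝ) (hρ : 0 ≤ ρ)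
    (r rhat : ℕ → S → A → ℝ)
    (hr01 : ∀ h', 1 ≤ h' → h' ≤ H → ∀ s a, 0 ≤ r h' s a ∧ r h' s a ≤ 1)
    (hrhat01 : ∀ h', 1 ≤ h' → h' ≤ H → ∀ s a, 0 ≤ rhat h' s a ∧ rhat h' s a ≤ 1)
    (hrclose : ∀ h', 1 ≤ h' → h' ≤ H → ∀ s a, |r h' s a - rhat h' s a| ≤ ρ)
    (Qh Qhath : S → A → ℝ)
    (hQh : ∀ s a, 0 ≤ Qh s a ∧ Qh s a ≤ (H : ℝ))
    (hQhath : ∀ s a, 0 ≤ Qhath s a ∧ Qhath s a ≤ (H : ℝ))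
    (hQclose : ∀ s a, |Qh s a - Qhath s a| ≤ ρ)
    (Z : (S → A → ℝ) → (ℕ → S → A → ℝ) → S → A → S → ℝ)
    (hZ : ∀ (G : S → A → ℝ) (g : ℕ → S → A → ℝ) (s : S) (a : A) (s' : S),
      Z G g s a s' =
        (G s a - g h s a - ⨆ a', Qaux P g H (H - h) s' a') ^ 2
          - (Qaux P g H (H + 1 - h) s a - g h s a
              - ⨆ a', Qaux P g H (H - h) s' a') ^ 2) :
    ∀ (s : S) (a : A) (s' : S),
      |Z Qh r s a s' - Z Qhath rhat s a s'| ≤ 30 * (H : ℝ) ^ 2 * ρ := by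
  intro s a s'
  have hH1 : (1:ℝ) ≤ (H:ℝ) := by exact_mod_cast hH
  have hρ' := hρ
  -- bounds and closeness for the relevant Qaux values
  have hth1 : H - h ≤ H := Nat.sub_le _ _
  have hth2 : H + 1 - h ≤ H := by omega
  set V1 : ℝ := ⨆ a', Qaux P r H (H - h) s' a' with hV1def
  set V2 : ℝ := ⨆ a', Qaux P rhat H (H - h) s' a' with hV2def
  set Q1 : ℝ := Qaux P r H (H + 1 - h) s a with hQ1def
  set Q2 : ℝ := Qaux P rhat H (H + 1 - h) s a with hQ2def
  have hQb1 := Qaux_bounds P r H hr01 (H + 1 - h) hth2 s a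
  have hQb2 := Qaux_bounds P rhat H hrhat01 (H + 1 - h) hth2 s a
  have hVb1 : 0 ≤ V1 ∧ V1 ≤ (H:ℝ) := by
    have hb := fun a' => Qaux_bounds P r H hr01 (H - h) hth1 s' a'
    constructor
    · exact le_trans (hb (Classical.arbitrary A)).1 (my_le_ciSup _ _)
    · refine my_ciSup_le _ _ fun a' => le_trans (hb a').2 ?_
      exact_mod_cast Nat.cast_le.mpr hth1
  have hVb2 : 0 ≤ V2 ∧ V2 ≤ (H:ℝ) := by
    have hb := fun a' => Qaux_bounds P rhat H hrhat01 (H - h) hth1 s' a'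
    constructor
    · exact le_trans (hb (Classical.arbitrary A)).1 (my_le_ciSup _ _)
    · refine my_ciSup_le _ _ fun a' => le_trans (hb a').2 ?_
      exact_mod_cast Nat.cast_le.mpr hth1
  have hQ1b : 0 ≤ Q1 ∧ Q1 ≤ (H:ℝ) := by
    refine ⟨hQb1.1, le_trans hQb1.2 ?_⟩
    exact_mod_cast Nat.cast_le.mpr hth2
  have hQ2b : 0 ≤ Q2 ∧ Q2 ≤ (H:ℝ) := by
    refine ⟨hQb2.1, le_trans hQb2.2 ?_⟩
    exact_mod_cast Nat.cast_le.mpr hth2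
  have hQclose' : |Q1 - Q2| ≤ (H:ℝ) * ρ := by
    refine le_trans (Qaux_close P r rhat H ρ hrclose (H + 1 - h) hth2 s a) ?_
    have : ((H + 1 - h : ℕ) : ℝ) ≤ (H:ℝ) := by exact_mod_cast Nat.cast_le.mpr hth2
    exact mul_le_mul_of_nonneg_right this hρ
  have hVclose : |V1 - V2| ≤ (H:ℝ) * ρ := by
    refine le_trans (abs_ciSup_sub_le _ _ _ fun a' =>
      Qaux_close P r rhat H ρ hrclose (H - h) hth1 s' a') ?_
    have : ((H - h : ℕ) : ℝ) ≤ (H:ℝ) := by exact_mod_cast Nat.cast_le.mpr hth1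
    exact mul_le_mul_of_nonneg_right this hρ
  obtain ⟨hr0, hr1⟩ := hr01 h hh1 hh2 s a
  obtain ⟨hrh0, hrh1⟩ := hrhat01 h hh1 hh2 s a
  have hrc := hrclose h hh1 hh2 s a
  obtain ⟨hQh0, hQh1⟩ := hQh s a
  obtain ⟨hQth0, hQth1⟩ := hQhath s a
  have hQc := hQclose s a
  rw [hZ Qh r s a s', hZ Qhath rhat s a s']
  set A1 : ℝ := Qh s a - r h s a - V1 with hA1def
  set A2 : ℝ := Qhath s a - rhat h s a - V2 with hA2def
  set B1 : ℝ := Q1 - r h s a - V1 with hB1def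
  set B2 : ℝ := Q2 - rhat h s a - V2 with hB2def
  have key : ∀ x y M d : ℝ, |x| ≤ M → |y| ≤ M → |x - y| ≤ d →
      |x^2 - y^2| ≤ 2*M*d := by
    intro x y M d hx hy hxy
    have h0 : x^2 - y^2 = (x + y) * (x - y) := by ring
    rw [h0, abs_mul]
    have hM : 0 ≤ M := le_trans (abs_nonneg x) hx
    have hxy' : |x + y| ≤ 2*M := by
      calc |x + y| ≤ |x| + |y| := abs_add_le _ _
        _ ≤ 2*M := by linarith
    exact mul_le_mul hxy' hxy (abs_nonneg _) (by linarith)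
  have hA1 : |A1| ≤ (H:ℝ) + 1 := by rw [abs_le]; constructor <;> [skip; skip] <;> simp only [hA1def] <;> linarith [hVb1.1, hVb1.2]
  have hA2 : |A2| ≤ (H:ℝ) + 1 := by rw [abs_le]; constructor <;> simp only [hA2def] <;> linarith [hVb2.1, hVb2.2]
  have hB1 : |B1| ≤ (H:ℝ) + 1 := by rw [abs_le]; constructor <;> simp only [hB1def] <;> linarith [hVb1.1, hVb1.2, hQ1b.1, hQ1b.2]
  have hB2 : |B2| ≤ (H:ℝ) + 1 := by rw [abs_le]; constructor <;> simp only [hB2def] <;> linarith [hVb2.1, hVb2.2, hQ2b.1, hQ2b.2]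
  have hAd : |A1 - A2| ≤ ((H:ℝ) + 2) * ρ := by
    have h0 : A1 - A2 = (Qh s a - Qhath s a) + (rhat h s a - r h s a) + (V2 - V1) := by
      simp only [hA1def, hA2def]; ring
    rw [h0]
    calc |(Qh s a - Qhath s a) + (rhat h s a - r h s a) + (V2 - V1)|
        ≤ |Qh s a - Qhath s a| + |rhat h s a - r h s a| + |V2 - V1| := abs_add_three _ _ _
      _ ≤ ρ + ρ + (H:ℝ)*ρ := by
          refine add_le_add (add_le_add hQc ?_) ?_
          · rw [abs_sub_comm]; exact hrc
          · rw [abs_sub_comm]; exact hVclose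
      _ ≤ ((H:ℝ) + 2) * ρ := le_of_eq (by ring)
  have hBd : |B1 - B2| ≤ (2*(H:ℝ) + 1) * ρ := by
    have h0 : B1 - B2 = (Q1 - Q2) + (rhat h s a - r h s a) + (V2 - V1) := by
      simp only [hB1def, hB2def]; ring
    rw [h0]
    calc |(Q1 - Q2) + (rhat h s a - r h s a) + (V2 - V1)|
        ≤ |Q1 - Q2| + |rhat h s a - r h s a| + |V2 - V1| := abs_add_three _ _ _
      _ ≤ (H:ℝ)*ρ + ρ + (H:ℝ)*ρ := by
          refine add_le_add (add_le_add hQclose' ?_) ?_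
          · rw [abs_sub_comm]; exact hrc
          · rw [abs_sub_comm]; exact hVclose
      _ = (2*(H:ℝ) + 1) * ρ := by ring
  have hAsq := key A1 A2 ((H:ℝ)+1) (((H:ℝ) + 2) * ρ) hA1 hA2 hAd
  have hBsq := key B1 B2 ((H:ℝ)+1) ((2*(H:ℝ) + 1) * ρ) hB1 hB2 hBd
  calc |A1^2 - B1^2 - (A2^2 - B2^2)| = |(A1^2 - A2^2) - (B1^2 - B2^2)| := by
        congr 1; ring
    _ ≤ |A1^2 - A2^2| + |B1^2 - B2^2| := abs_sub _ _
    _ ≤ 2*((H:ℝ)+1)*(((H:ℝ) + 2) * ρ) + 2*((H:ℝ)+1)*((2*(H:ℝ) + 1) * ρ) := add_le_add hAsq hBsq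
    _ ≤ 30 * (H:ℝ)^2 * ρ := final_arith (H:ℝ) ρ hH1 hρ
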